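/- If f : X → Y is w-continuous (or W-continuous) between gtses and the ring Cl_Y of closed sets of Y is disjunctive, then f is weakly continuous, i.e., f : X_top → Y_top is continuous. -/
import Mathlib


open Set TopologicalSpace Topology

universe u

/-- A generalized topology in the sense of Delfs–Knebusch (axioms following
Piękosz, Definition 2.2.1): `Cov` is the collection of admissible open families,
and the open sets are the members of `⋃₀ Cov`. -/
structure GenTop (X : Type u) : Type u where
  Cov : Set (Set (Set X))
  univ_open : Set.univ ∈ ⋃₀ Cov
  finite_admissible : ∀ 𝒰 : Set (Set X), 𝒰.Finite → 𝒰 ⊆ ⋃₀ Cov → 𝒰 ∈ Cov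
  union_open : ∀ 𝒰 ∈ Cov, ⋃₀ 𝒰 ∈ ⋃₀ Cov
  restrict : ∀ 𝒰 ∈ Cov, ∀ V ∈ ⋃₀ Cov, (fun U => V ∩ U) '' 𝒰 ∈ Cov
  transitive : ∀ 𝒰 ∈ Cov, ∀ f : Set X → Set (Set X),
    (∀ U ∈ 𝒰, f U ∈ Cov ∧ ⋃₀ f U = U) → {V : Set X | ∃ U ∈ 𝒰, V ∈ f U} ∈ Cov
  coarsen : ∀ 𝒰 ∈ Cov, ∀ 𝒱 ⊆ ⋃₀ Cov, (∀ U ∈ 𝒰, ∃ V ∈ 𝒱, U ⊆ V) →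
    ⋃₀ 𝒱 = ⋃₀ 𝒰 → 𝒱 ∈ Cov
  regular : ∀ 𝒰 ∈ Cov, ∀ W ⊆ ⋃₀ 𝒰, (∀ U ∈ 𝒰, W ∩ U ∈ ⋃₀ Cov) → W ∈ ⋃₀ Cov

namespace GenTop

variable {X : Type u} (G : GenTop X)

/-- The open sets of a gts. -/
def Opens : Set (Set X) := ⋃₀ G.Cov

/-- The closed sets of a gts. -/
def Closeds : Set (Set X) := {A : Set X | Aᶜ ∈ G.Opens}

/-- The topologization of a gts: the topology generated by the open sets. -/
def topol : TopologicalSpace X := TopologicalSpace.generateFrom G.Opens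

/-- A gts is weakly normal if disjoint sets, each a singleton or closed,
can be separated by disjoint open sets. -/
def WeaklyNormal : Prop :=
  ∀ A₁ A₂ : Set X, ((∃ x, A₁ = {x}) ∨ A₁ ∈ G.Closeds) →
    ((∃ x, A₂ = {x}) ∨ A₂ ∈ G.Closeds) → Disjoint A₁ A₂ →
    ∃ W₁ ∈ G.Opens, ∃ W₂ ∈ G.Opens, Disjoint W₁ W₂ ∧ A₁ ⊆ W₁ ∧ A₂ ⊆ W₂

end GenTop

/-- `𝒰 ⪯ 𝒱`: every member of `𝒰` is contained in a member of `𝒱` and the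
unions agree. -/
def Refines {X : Type u} (𝒰 𝒱 : Set (Set X)) : Prop :=
  (∀ U ∈ 𝒰, ∃ V ∈ 𝒱, U ⊆ V) ∧ ⋃₀ 𝒰 = ⋃₀ 𝒱

/-- `f` is w-continuous: every finite open cover `𝒱` of `Y` admits a finite
open cover `𝒰` of `X` with `𝒰 ⪯ f⁻¹(𝒱)`. -/
def WSmallCont {X Y : Type u} (GX : GenTop X) (GY : GenTop Y) (f : X → Y) : Prop :=
  ∀ 𝒱 ⊆ GY.Opens, 𝒱.Finite → ⋃₀ 𝒱 = Set.univ →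
    ∃ 𝒰 ⊆ GX.Opens, 𝒰.Finite ∧ ⋃₀ 𝒰 = Set.univ ∧
      Refines 𝒰 ((fun V => f ⁻¹' V) '' 𝒱)

/-- `f` is W-continuous: every admissible cover `𝒱` of `Y` admits an admissible
cover `𝒰` of `X` with `𝒰 ⪯ f⁻¹(𝒱)`. -/
def WBigCont {X Y : Type u} (GX : GenTop X) (GY : GenTop Y) (f : X → Y) : Prop :=
  ∀ 𝒱 ∈ GY.Cov, ⋃₀ 𝒱 = Set.univ →
    ∃ 𝒰 ∈ GX.Cov, ⋃₀ 𝒰 = Set.univ ∧ Refines 𝒰 ((fun V => f ⁻¹' V) '' 𝒱)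

/-- A disjunctive ring of sets. -/
def IsDisjunctive {X : Type u} (C : Set (Set X)) : Prop :=
  ∀ A : Set X, (A ∈ C ∨ ∃ x, A = {x}) → ∀ y ∉ A, ∃ B ∈ C, y ∈ B ∧ B ⊆ Aᶜ

/-- If `f` is w-continuous or W-continuous and `Cl_Y` is disjunctive, then `f`
is weakly continuous, i.e. continuous for the topologizations. -/
theorem stmt_19 {X Y : Type u} (GX : GenTop X) (GY : GenTop Y) (f : X → Y)
    (hf : WSmallCont GX GY f ∨ WBigCont GX GY f)
    (hd : IsDisjunctive GY.Closeds) :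
    @Continuous X Y GX.topol GY.topol f := by
  letI : TopologicalSpace X := GX.topol
  show @Continuous X Y GX.topol (TopologicalSpace.generateFrom GY.Opens) f
  rw [continuous_generateFrom_iff]
  intro V hV
  have key : ∀ x ∈ f ⁻¹' V, ∃ U ∈ GX.Opens, x ∈ U ∧ U ⊆ f ⁻¹' V := by
    intro x hx
    obtain ⟨B, hBcl, hyB, hBsub⟩ :=
      hd Vᶜ (Or.inl (by simpa [GenTop.Closeds] using hV)) (f x) (by simpa using hx)
    rw [compl_compl] at hBsub
    set 𝒱 : Set (Set Y) := {V, Bᶜ} with h𝒱def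
    have h𝒱sub : 𝒱 ⊆ GY.Opens := by
      rintro W (rfl | rfl)
      · exact hV
      · exact hBcl
    have h𝒱fin : 𝒱.Finite := (Set.finite_singleton _).insert _
    have h𝒱cov : ⋃₀ 𝒱 = Set.univ := by
      ext y
      simp only [Set.mem_sUnion, Set.mem_univ, iff_true]
      by_cases hy : y ∈ B
      · exact ⟨V, Or.inl rfl, hBsub hy⟩
      · exact ⟨Bᶜ, Or.inr rfl, hy⟩
    obtain ⟨𝒰, h𝒰sub, h𝒰cov, h𝒰ref⟩ :
        ∃ 𝒰 ⊆ GX.Opens, ⋃₀ 𝒰 = Set.univ ∧ Refines 𝒰 ((fun W => f ⁻¹' W) '' 𝒱) := by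
      rcases hf with hf | hf
      · obtain ⟨𝒰, h1, _, h3, h4⟩ := hf 𝒱 h𝒱sub h𝒱fin h𝒱cov
        exact ⟨𝒰, h1, h3, h4⟩
      · have h𝒱adm : 𝒱 ∈ GY.Cov := GY.finite_admissible 𝒱 h𝒱fin h𝒱sub
        obtain ⟨𝒰, h1, h3, h4⟩ := hf 𝒱 h𝒱adm h𝒱cov
        exact ⟨𝒰, fun U hU => ⟨𝒰, h1, hU⟩, h3, h4⟩
    have hx𝒰 : x ∈ ⋃₀ 𝒰 := h𝒰cov ▸ Set.mem_univ x
    obtain ⟨U, hU𝒰, hxU⟩ := hx𝒰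
    obtain ⟨W', hW', hUW⟩ := h𝒰ref.1 U hU𝒰
    obtain ⟨W, hW𝒱, rfl⟩ := hW'
    refine ⟨U, h𝒰sub hU𝒰, hxU, ?_⟩
    rcases hW𝒱 with rfl | rfl
    · exact hUW
    · exact absurd (hUW hxU) (by simpa using hyB)
  have heq : f ⁻¹' V = ⋃₀ {U | U ∈ GX.Opens ∧ U ⊆ f ⁻¹' V} := by
    ext x
    constructor
    · intro hx
      obtain ⟨U, hU1, hU2, hU3⟩ := key x hx
      exact ⟨U, ⟨hU1, hU3⟩, hU2⟩
    · rintro ⟨U, ⟨_, hU⟩, hxU⟩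
      exact hU hxU
  rw [heq]
  exact isOpen_sUnion fun U hU =>
    TopologicalSpace.GenerateOpen.basic U hU.1
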